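/- Let p, q ∈ ℂ[X] be nonzero polynomials that are squarefree and coprime (no repeated and no common roots). Then the following are equivalent: (i) both (p/q)² and (q/p)² admit rational antiderivatives, i.e. there exist a, b ∈ ℂ[X] with b ≠ 0 and (a'·b − a·b')·q² = p²·b², and there exist c, d ∈ ℂ[X] with d ≠ 0 and (c'·d − c·d')·p² = q²·d²; (ii) p''·q − 2·p'·q' + p·q'' = 0. (Burchnall–Chaundy: rationality of ∫(p/q)²dz and ∫(q/p)²dz is equivalent to {p,q}_1 = 0.) -/

import Mathlib

open Polynomial


lemma poly_integral (g : ℂ[X]) : ∃ a : ℂ[X], derivative a = g := by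
  refine ⟨g.sum fun n c => C (c / (n+1)) * X^(n+1), ?_⟩
  rw [Polynomial.sum_def, map_sum]
  conv_rhs => rw [← Polynomial.sum_C_mul_X_pow_eq g]
  rw [Polynomial.sum_def]
  refine Finset.sum_congr rfl fun n _ => ?_
  have hn : ((n:ℂ) + 1) ≠ 0 := by exact_mod_cast Nat.succ_ne_zero n
  rw [derivative_C_mul, derivative_X_pow]
  push_cast
  rw [← mul_assoc, ← C_mul, div_mul_cancel₀ _ hn]

lemma sq_dvd_of_root_of_root_derivative {f : ℂ[X]} {β : ℂ}
    (h0 : f.eval β = 0) (h1 : (derivative f).eval β = 0) : (X - C β)^2 ∣ f := by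
  obtain ⟨g, rfl⟩ := (dvd_iff_isRoot.mpr h0)
  have hg : g.eval β = 0 := by
    have := h1
    simp [derivative_mul] at this
    simpa using this
  obtain ⟨h, rfl⟩ := (dvd_iff_isRoot.mpr hg)
  exact ⟨h, by ring⟩


lemma dvd_of_forall_isRoot {s f : ℂ[X]} (hs : Squarefree s)
    (h : ∀ β : ℂ, s.IsRoot β → f.IsRoot β) : s ∣ f := by
  classical
  rcases eq_or_ne f 0 with rfl | hf
  · exact dvd_zero _
  have hs0 : s ≠ 0 := hs.ne_zero
  have hsep : s.Separable := (PerfectField.separable_iff_squarefree).mpr hs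
  have hnd : s.roots.Nodup := nodup_roots hsep
  have hle : s.roots ≤ f.roots := by
    rw [Multiset.le_iff_count]
    intro β
    by_cases hb : β ∈ s.roots
    · rw [Multiset.count_eq_one_of_mem hnd hb, count_roots]
      exact (rootMultiplicity_pos hf).mpr (h β (isRoot_of_mem_roots hb))
    · simp [Multiset.count_eq_zero_of_notMem hb]
  have hdvd : (s.roots.map fun a => X - C a).prod ∣ f :=
    (Multiset.prod_X_sub_C_dvd_iff_le_roots hf _).mpr hle
  have heq := Splits.eq_prod_roots (f := s) (IsAlgClosed.splits s)
  rw [heq, C_mul_dvd (leadingCoeff_ne_zero.2 hs0)]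
  exact hdvd

lemma exists_antideriv : ∀ (n : ℕ) (s g : ℂ[X]), s.natDegree ≤ n → Squarefree s →
    s ∣ (derivative g * derivative s - g * derivative (derivative s)) →
    ∃ a : ℂ[X], derivative a * s - a * derivative s = g := by
  intro n
  induction n with
  | zero =>
    intro s g hdeg hsq _
    obtain ⟨c, rfl⟩ := natDegree_eq_zero.mp (Nat.le_zero.mp hdeg)
    have hc : c ≠ 0 := by
      rintro rfl; exact hsq.ne_zero (by simp)
    obtain ⟨F, hF⟩ := poly_integral (C c⁻¹ * g)
    refine ⟨F, ?_⟩
    rw [hF, derivative_C]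
    rw [mul_comm, ← mul_assoc, ← C_mul, mul_inv_cancel₀ hc]
    simp
  | succ n ih =>
    intro s g hdeg hsq hdvd
    by_cases hs0 : s.natDegree = 0
    · obtain ⟨c, rfl⟩ := natDegree_eq_zero.mp hs0
      have hc : c ≠ 0 := by
        rintro rfl; exact hsq.ne_zero (by simp)
      obtain ⟨F, hF⟩ := poly_integral (C c⁻¹ * g)
      refine ⟨F, ?_⟩
      rw [hF, derivative_C]
      rw [mul_comm, ← mul_assoc, ← C_mul, mul_inv_cancel₀ hc]
      simp
    · have hsne : s ≠ 0 := hsq.ne_zero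
      obtain ⟨β, hβ⟩ := Complex.exists_root
        (natDegree_pos_iff_degree_pos.mp (Nat.pos_of_ne_zero hs0))
      obtain ⟨t, hst⟩ := dvd_iff_isRoot.mpr hβ
      have ht0 : t ≠ 0 := by rintro rfl; rw [mul_zero] at hst; exact hsne hst
      have hsqt : Squarefree t := hsq.squarefree_of_dvd ⟨X - C β, by rw [hst]; ring⟩
      have htβ : t.eval β ≠ 0 := by
        intro h
        obtain ⟨t₁, ht₁⟩ := dvd_iff_isRoot.mpr h
        exact not_isUnit_X_sub_C β
          (hsq (X - C β) ⟨t₁, by rw [hst, ht₁]; ring⟩)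
      -- degree of t
      have hdegt : t.natDegree ≤ n := by
        have : s.natDegree = t.natDegree + 1 := by
          rw [hst, natDegree_mul (X_sub_C_ne_zero β) ht0, natDegree_X_sub_C]
          ring
        omega
      -- derivatives of s
      have hs' : derivative s = t + (X - C β) * derivative t := by
        rw [hst]
        simp only [derivative_mul, derivative_sub, derivative_X, derivative_C]
        ring
      have hs'' : derivative (derivative s)
          = 2 * derivative t + (X - C β) * derivative (derivative t) := by
        rw [hs']
        simp only [derivative_add, derivative_mul, derivative_sub, derivative_X, derivative_C]
        ring
      -- the residue condition at β
      have hres : (derivative g).eval β * t.eval β - 2 * g.eval β * (derivative t).eval β = 0 := by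
        obtain ⟨w, hw⟩ := hdvd
        have h5 := congrArg (eval β) hw
        rw [hs'', hs', hst] at h5
        simp only [eval_mul, eval_sub, eval_add, eval_ofNat, eval_X, eval_C, sub_self,
          zero_mul, mul_zero] at h5
        have hβ0 : eval β s = 0 := hβ
        rw [hst] at hβ0
        simp only [eval_mul, eval_sub, eval_X, eval_C, sub_self, zero_mul] at hβ0
        linear_combination h5
      set B : ℂ := g.eval β / (t.eval β)^2 with hB
      have hsq2 : (X - C β)^2 ∣ (g - C B * t^2) := by
        apply sq_dvd_of_root_of_root_derivative
        · simp only [eval_sub, eval_mul, eval_pow, eval_C, hB]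
          field_simp
          ring
        · simp only [derivative_sub, derivative_mul, derivative_C, derivative_pow]
          simp only [eval_sub, eval_mul, eval_add, eval_pow, eval_C, hB]
          field_simp
          linear_combination (t.eval β) * hres - (t.eval β)^4 * (eval_zero : eval β (0:ℂ[X]) = 0)
      obtain ⟨h, hgh⟩ := hsq2
      -- condition for t
      have hcop : IsCoprime (X - C β) t := by
        obtain ⟨u, hu⟩ := X_sub_C_dvd_sub_C_eval (a := β) (p := t)
        have h1 : C (eval β t)⁻¹ * C (eval β t) = (1 : ℂ[X]) := by
          rw [← C_mul, inv_mul_cancel₀ htβ, C_1]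
        exact ⟨-(C (eval β t)⁻¹ * u), C (eval β t)⁻¹, by
          linear_combination C (eval β t)⁻¹ * hu + h1⟩
      have hdvdt : t ∣ (derivative h * derivative t - h * derivative (derivative t)) := by
        have hts : t ∣ (derivative g * derivative s - g * derivative (derivative s)) :=
          dvd_trans ⟨X - C β, by rw [hst]; ring⟩ hdvd
        have hg : g = C B * (t * t) + ((X - C β) * (X - C β)) * h := by linear_combination hgh
        have hg' := congrArg derivative hg
        simp only [derivative_add, derivative_mul, derivative_sub, derivative_C,
          derivative_X] at hg'
        have key : (X - C β)^3 * (derivative h * derivative t - h * derivative (derivative t))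
            = (derivative g * derivative s - g * derivative (derivative s))
              - t * ((X - C β) * (2 * C B * derivative t ^2 - C B * t * derivative (derivative t)
                + 2 * h + (X - C β) * derivative h)) := by
          rw [hg', hg, hs'', hs']; ring
        have h3 : t ∣ (X - C β)^3 * (derivative h * derivative t - h * derivative (derivative t)) := by
          rw [key]
          exact dvd_sub hts (Dvd.intro _ rfl)
        exact (hcop.pow_left).symm.dvd_of_dvd_mul_left h3
      obtain ⟨a₁, ha₁⟩ := ih t h hdegt hsqt hdvdt
      refine ⟨(X - C β) * a₁ - C B * t, ?_⟩
      have hg : g = C B * (t * t) + ((X - C β) * (X - C β)) * h := by linear_combination hgh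
      rw [hst, hg]
      simp only [derivative_sub, derivative_mul, derivative_X, derivative_C]
      linear_combination ((X - C β)^2) * ha₁


lemma root_condition {p q a b : ℂ[X]} {β : ℂ}
    (hp0 : p.eval β ≠ 0) (hqβ : q.eval β = 0) (hq'β : (derivative q).eval β ≠ 0)
    (hb : b ≠ 0)
    (heq : (derivative a * b - a * derivative b) * q^2 = p^2 * b^2) :
    2 * (derivative p).eval β * (derivative q).eval β
      - p.eval β * (derivative (derivative q)).eval β = 0 := by
  classical
  have hq0 : q ≠ 0 := fun h => hq'β (by simp [h])
  have hp' : p ≠ 0 := fun h => hp0 (by simp [h])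
  obtain ⟨a₁, ha⟩ := gcd_dvd_left a b
  obtain ⟨b₁, hbb⟩ := gcd_dvd_right a b
  set d := GCDMonoid.gcd a b with hd
  have hd0 : d ≠ 0 := fun h => hb (by rw [hbb, h, zero_mul])
  have hb₁0 : b₁ ≠ 0 := fun h => hb (by rw [hbb, h, mul_zero])
  have hcop : IsCoprime a₁ b₁ := by
    have h1 := isCoprime_div_gcd_div_gcd (p := a) (q := b) hb
    rw [← hd, ha, hbb] at h1
    rwa [mul_div_cancel_left₀ _ hd0, mul_div_cancel_left₀ _ hd0] at h1
  have heq₂ : (derivative a₁ * b₁ - a₁ * derivative b₁) * (q * q)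
      = (p * p) * (b₁ * b₁) := by
    have hexp : derivative a * b - a * derivative b
        = d^2 * (derivative a₁ * b₁ - a₁ * derivative b₁) := by
      rw [ha, hbb]; simp only [derivative_mul]; ring
    have h2 : d^2 * ((derivative a₁ * b₁ - a₁ * derivative b₁) * (q * q))
        = d^2 * ((p * p) * (b₁ * b₁)) := by
      rw [hexp, hbb] at heq; linear_combination heq
    exact mul_left_cancel₀ (pow_ne_zero 2 hd0) h2
  have hbβ : b₁.eval β = 0 := by
    by_contra hbne
    have h3 := congrArg (eval β) heq₂
    simp only [eval_mul, eval_sub, hqβ, mul_zero, zero_mul] at h3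
    exact (mul_ne_zero (mul_ne_zero hp0 hp0) (mul_ne_zero hbne hbne)) h3.symm
  have haβ : a₁.eval β ≠ 0 := by
    intro h
    obtain ⟨x, y, hxy⟩ := hcop
    have h4 := congrArg (eval β) hxy
    simp [h, hbβ] at h4
  have hu0 : derivative a₁ * b₁ - a₁ * derivative b₁ ≠ 0 := by
    intro h
    rw [h, zero_mul] at heq₂
    exact (mul_ne_zero (mul_ne_zero hp' hp') (mul_ne_zero hb₁0 hb₁0)) heq₂.symm
  have hb'0 : derivative b₁ ≠ 0 := by
    intro h
    have hbc := eq_C_of_natDegree_eq_zero (natDegree_eq_zero_of_derivative_eq_zero h)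
    rw [hbc] at hbβ
    simp only [eval_C] at hbβ
    exact hb₁0 (by rw [hbc, hbβ, C_0])
  have ha'b0 : a₁ * derivative b₁ ≠ 0 := mul_ne_zero (fun h => haβ (by simp [h])) hb'0
  set m := rootMultiplicity β b₁ with hm
  have hm1 : 1 ≤ m := (rootMultiplicity_pos hb₁0).mpr hbβ
  have hrb' : rootMultiplicity β (derivative b₁) = m - 1 :=
    derivative_rootMultiplicity_of_root hbβ
  have hra : rootMultiplicity β a₁ = 0 := rootMultiplicity_eq_zero haβ
  have hrab' : rootMultiplicity β (a₁ * derivative b₁) = m - 1 := by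
    rw [rootMultiplicity_mul ha'b0, hra, hrb', zero_add]
  have hq1 : rootMultiplicity β q = 1 := by
    have h1 : rootMultiplicity β (derivative q) = rootMultiplicity β q - 1 :=
      derivative_rootMultiplicity_of_root hqβ
    have h2 : rootMultiplicity β (derivative q) = 0 :=
      rootMultiplicity_eq_zero (fun hh => hq'β hh)
    have h3 : 1 ≤ rootMultiplicity β q := (rootMultiplicity_pos hq0).mpr hqβ
    omega
  have hru : rootMultiplicity β (derivative a₁ * b₁ - a₁ * derivative b₁) = m - 1 := by
    apply le_antisymm
    · by_contra hlt
      push_neg at hlt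
      have hmle : m ≤ rootMultiplicity β (derivative a₁ * b₁ - a₁ * derivative b₁) := by omega
      have hdu : (X - C β)^m ∣ (derivative a₁ * b₁ - a₁ * derivative b₁) :=
        (le_rootMultiplicity_iff hu0).mp hmle
      have hdb : (X - C β)^m ∣ derivative a₁ * b₁ :=
        dvd_mul_of_dvd_right (pow_rootMultiplicity_dvd b₁ β) _
      have : (X - C β)^m ∣ a₁ * derivative b₁ := by
        have := dvd_sub hdb hdu
        simpa using this
      have := (le_rootMultiplicity_iff ha'b0).mpr this
      omega
    · have d1 : (X - C β)^(m-1) ∣ derivative a₁ * b₁ :=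
        dvd_mul_of_dvd_right ((pow_dvd_pow _ (Nat.sub_le m 1)).trans
          (pow_rootMultiplicity_dvd b₁ β)) _
      have d2 : (X - C β)^(m-1) ∣ a₁ * derivative b₁ := by
        apply dvd_mul_of_dvd_right
        rw [← hrb']
        exact pow_rootMultiplicity_dvd _ β
      exact (le_rootMultiplicity_iff hu0).mpr (dvd_sub d1 d2)
  have hmeq := congrArg (rootMultiplicity β) heq₂
  rw [rootMultiplicity_mul (mul_ne_zero hu0 (mul_ne_zero hq0 hq0)),
    rootMultiplicity_mul (mul_ne_zero (mul_ne_zero hp' hp') (mul_ne_zero hb₁0 hb₁0))]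
    at hmeq
  rw [rootMultiplicity_mul (mul_ne_zero hq0 hq0), rootMultiplicity_mul (mul_ne_zero hp' hp'),
    rootMultiplicity_mul (mul_ne_zero hb₁0 hb₁0), hru, hq1,
    rootMultiplicity_eq_zero hp0] at hmeq
  have hmval : m = 1 := by omega
  have hb'β : (derivative b₁).eval β ≠ 0 := by
    intro h
    exact hb'0 (rootMultiplicity_eq_zero_iff.mp (by rw [hrb', hmval]) h)
  -- now the analytic part
  have e2 := congrArg (eval β) (congrArg derivative (congrArg derivative heq₂))
  have e3 := congrArg (eval β)
    (congrArg derivative (congrArg derivative (congrArg derivative heq₂)))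
  simp only [derivative_mul, derivative_sub, derivative_add, eval_add, eval_sub, eval_mul,
    hqβ, hbβ, mul_zero, zero_mul, add_zero, zero_add, sub_zero, zero_sub] at e2 e3
  set A := eval β a₁
  set B' := eval β (derivative b₁)
  set B'' := eval β (derivative (derivative b₁))
  set P := eval β p
  set P' := eval β (derivative p)
  set Q' := eval β (derivative q)
  set Q'' := eval β (derivative (derivative q))
  have E2 : (A*Q'^2 + P^2*B')*B' = 0 := by linear_combination (-(1:ℂ)/2) * e2
  have hA : A*Q'^2 + P^2*B' = 0 := (mul_eq_zero.mp E2).resolve_right hb'β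
  have E3 : ((-A)*Q'*Q'' - 2*P*P'*B')*B' + (-(A*Q'^2) - P^2*B')*B'' = 0 := by
    linear_combination ((1:ℂ)/6) * e3
  have h5 : ((-A)*Q'*Q'' - 2*P*P'*B')*B' = 0 := by linear_combination E3 + B'' * hA
  have h6 : (-A)*Q'*Q'' - 2*P*P'*B' = 0 := (mul_eq_zero.mp h5).resolve_right hb'β
  have key : A*Q'*P*(2*P'*Q' - P*Q'') = 0 := by
    linear_combination P^2 * h6 + 2*P*P' * hA
  have hAQP : A*Q'*P ≠ 0 := mul_ne_zero (mul_ne_zero haβ hq'β) hp0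
  have hfin := (mul_eq_zero.mp key).resolve_left hAQP
  linear_combination hfin


/-- Burchnall–Chaundy: for squarefree coprime `p, q`, rationality of the
antiderivatives of `(p/q)²` and `(q/p)²` is equivalent to `{p,q}_1 = 0`. -/
theorem rational_integrals_iff_bilinear_one
    (p q : ℂ[X]) (hp : p ≠ 0) (hq : q ≠ 0)
    (hsp : Squarefree p) (hsq : Squarefree q) (hpq : IsCoprime p q) :
    ((∃ a b : ℂ[X], b ≠ 0 ∧ (derivative a * b - a * derivative b) * q ^ 2 = p ^ 2 * b ^ 2) ∧
     (∃ c d : ℂ[X], d ≠ 0 ∧ (derivative c * d - c * derivative d) * p ^ 2 = q ^ 2 * d ^ 2)) ↔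
    derivative (derivative p) * q - 2 * derivative p * derivative q
        + p * derivative (derivative q) = 0 := by
  constructor
  · rintro ⟨⟨a, b, hb, heqb⟩, ⟨c, d, hd, heqd⟩⟩
    have hsepp : IsCoprime p (derivative p) := PerfectField.separable_iff_squarefree.mpr hsp
    have hsepq : IsCoprime q (derivative q) := PerfectField.separable_iff_squarefree.mpr hsq
    set D := derivative (derivative p) * q - 2 * derivative p * derivative q
        + p * derivative (derivative q) with hDdef
    have hroot : ∀ β : ℂ, (p * q).IsRoot β → D.IsRoot β := by
      intro β hβ
      have hβ' : p.eval β = 0 ∨ q.eval β = 0 := by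
        simpa [IsRoot, eval_mul, mul_eq_zero] using hβ
      have evalD : D.eval β = (derivative (derivative p)).eval β * q.eval β
          - 2 * (derivative p).eval β * (derivative q).eval β
          + p.eval β * (derivative (derivative q)).eval β := by
        simp [hDdef]
      rcases hβ' with hpβ | hqβ
      · have hqb : q.eval β ≠ 0 := by
          intro h
          obtain ⟨x, y, hxy⟩ := hpq
          have := congrArg (eval β) hxy
          simp [hpβ, h] at this
        have hp'β : (derivative p).eval β ≠ 0 := by
          intro h
          obtain ⟨x, y, hxy⟩ := hsepp
          have := congrArg (eval β) hxy
          simp [hpβ, h] at this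
        have hr := root_condition hqb hpβ hp'β hd heqd
        show D.eval β = 0
        rw [evalD, hpβ]
        linear_combination (-1 : ℂ) * hr
      · have hpb : p.eval β ≠ 0 := by
          intro h
          obtain ⟨x, y, hxy⟩ := hpq
          have := congrArg (eval β) hxy
          simp [hqβ, h] at this
        have hq'β : (derivative q).eval β ≠ 0 := by
          intro h
          obtain ⟨x, y, hxy⟩ := hsepq
          have := congrArg (eval β) hxy
          simp [hqβ, h] at this
        have hr := root_condition hpb hqβ hq'β hb heqb
        show D.eval β = 0
        rw [evalD, hqβ]
        linear_combination (-1 : ℂ) * hr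
    have hsqpq : Squarefree (p * q) := squarefree_mul_iff.mpr ⟨hpq.isRelPrime, hsp, hsq⟩
    have hDdvd : p * q ∣ D := dvd_of_forall_isRoot hsqpq hroot
    rcases Nat.eq_zero_or_pos p.natDegree with hp1 | hp1
    · obtain ⟨cp, hcp⟩ := natDegree_eq_zero.mp hp1
      rcases eq_or_ne (derivative (derivative q)) 0 with hq2 | hq2
      · rw [hDdef, ← hcp, hq2]
        simp [← hcp]
      · exfalso
        have hq'0 : derivative q ≠ 0 := fun h => hq2 (by rw [h, derivative_zero])
        have hDq : D = C cp * derivative (derivative q) := by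
          rw [hDdef, ← hcp]; simp [← hcp]
        have hdvd2 : q ∣ derivative (derivative q) := by
          have hcp0 : cp ≠ 0 := fun h => hp (by rw [← hcp, h, C_0])
          have : C cp * q ∣ C cp * derivative (derivative q) := by
            rw [← hDq]
            exact dvd_trans ⟨1, by rw [hcp, mul_one]⟩ hDdvd
          exact (mul_dvd_mul_iff_left (fun h => hcp0 (by simpa using (C_eq_zero.mp h)))).mp this
        have hlt : (derivative (derivative q)).degree < q.degree :=
          lt_trans (degree_derivative_lt hq'0) (degree_derivative_lt hq)
        exact hq2 (eq_zero_of_dvd_of_degree_lt hdvd2 hlt)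
    rcases Nat.eq_zero_or_pos q.natDegree with hq1 | hq1
    · obtain ⟨cq, hcq⟩ := natDegree_eq_zero.mp hq1
      rcases eq_or_ne (derivative (derivative p)) 0 with hp2 | hp2
      · rw [hDdef, ← hcq, hp2]
        simp [← hcq]
      · exfalso
        have hp'0 : derivative p ≠ 0 := fun h => hp2 (by rw [h, derivative_zero])
        have hDp : D = derivative (derivative p) * C cq := by
          rw [hDdef, ← hcq]; simp [← hcq]
        have hdvd2 : p ∣ derivative (derivative p) := by
          have hcq0 : cq ≠ 0 := fun h => hq (by rw [← hcq, h, C_0])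
          have : p * C cq ∣ derivative (derivative p) * C cq := by
            rw [← hDp]
            exact dvd_trans ⟨1, by rw [hcq, mul_one]⟩ hDdvd
          have hcu : C cq ≠ 0 := fun h => hcq0 (by simpa using (C_eq_zero.mp h))
          rw [mul_comm p _, mul_comm _ (C cq)] at this
          exact (mul_dvd_mul_iff_left hcu).mp this
        have hlt : (derivative (derivative p)).degree < p.degree :=
          lt_trans (degree_derivative_lt hp'0) (degree_derivative_lt hp)
        exact hp2 (eq_zero_of_dvd_of_degree_lt hdvd2 hlt)
    -- main case : both nonconstant
    have hp'0 : derivative p ≠ 0 := fun h => by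
      have := natDegree_eq_zero_of_derivative_eq_zero h; omega
    have hq'0 : derivative q ≠ 0 := fun h => by
      have := natDegree_eq_zero_of_derivative_eq_zero h; omega
    have hpqbot : (⊥ : WithBot ℕ) < degree p + degree q := by
      refine bot_lt_iff_ne_bot.mpr ?_
      rw [← degree_mul, ne_eq, degree_eq_bot]
      exact mul_ne_zero hp hq
    have hdeg : D.degree < (p * q).degree := by
      rw [degree_mul, hDdef]
      refine lt_of_le_of_lt (degree_add_le _ _) (max_lt (lt_of_le_of_lt (degree_sub_le _ _)
        (max_lt ?_ ?_)) ?_)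
      · rcases eq_or_ne (derivative (derivative p)) 0 with h | h
        · rw [h, zero_mul, degree_zero]; exact hpqbot
        · rw [degree_mul]
          refine WithBot.add_lt_add_right (degree_eq_bot.not.mpr hq) ?_
          exact lt_trans (degree_derivative_lt hp'0) (degree_derivative_lt hp)
      · rw [show (2 : ℂ[X]) * derivative p * derivative q
            = C 2 * (derivative p * derivative q) by
          rw [(map_ofNat C 2 : C (2:ℂ) = 2)]; ring]
        rw [degree_C_mul two_ne_zero, degree_mul]
        exact WithBot.add_lt_add_of_le_of_lt (degree_eq_bot.not.mpr hp'0)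
          (degree_derivative_lt hp).le (degree_derivative_lt hq)
      · rcases eq_or_ne (derivative (derivative q)) 0 with h | h
        · rw [h, mul_zero, degree_zero]; exact hpqbot
        · rw [degree_mul]
          refine WithBot.add_lt_add_left (degree_eq_bot.not.mpr hp) ?_
          exact lt_trans (degree_derivative_lt hq'0) (degree_derivative_lt hq)
    exact eq_zero_of_dvd_of_degree_lt hDdvd hdeg
  · intro hD
    constructor
    · obtain ⟨a, haeq⟩ := exists_antideriv q.natDegree q (p^2) le_rfl hsq
        ⟨p * derivative (derivative p), by
          rw [pow_two]
          simp only [derivative_mul]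
          linear_combination (-p) * hD⟩
      exact ⟨a, q, hq, by linear_combination q^2 * haeq⟩
    · obtain ⟨c, hceq⟩ := exists_antideriv p.natDegree p (q^2) le_rfl hsp
        ⟨q * derivative (derivative q), by
          rw [pow_two]
          simp only [derivative_mul]
          linear_combination (-q) * hD⟩
      exact ⟨c, p, hp, by linear_combination p^2 * hceq⟩
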